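/- Let r > 0 and x̄, ȳ ∈ ℝ, sX, sY > 0. Define the cubic coefficients a₃ = 1+r, a₂ = −(2x̄+ȳ) − r(2ȳ+x̄), a₁ = x̄² + 2(1+r)x̄ȳ + rȳ² + sX² + r sY², a₀ = −x̄²ȳ − rȳ²x̄ − sX²ȳ − r sY² x̄, and let Δ = a₁²a₂² − 4a₀a₂³ − 4a₁³a₃ + 18a₀a₁a₂a₃ − 27a₀²a₃². Then Δ = sY⁶ · D(γ, δ) where γ = sX/sY, δ = (x̄ − ȳ)/sY, and D(γ,δ) = δ⁶r² − 2δ⁴[γ²(2+2r−r²) + (2r³+2r⁴−r²)] − δ²[γ⁴(8+8r−r²) + (8r⁴+8r³−r²) − 2γ²(10r+19r²+10r³)] − 4(1+r)(r+γ²)³. -/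
import Mathlib


noncomputable def D (r γ δ : ℝ) : ℝ :=
  δ^6*r^2 - 2*δ^4*(γ^2*(2 + 2*r - r^2) + (2*r^3 + 2*r^4 - r^2))
  - δ^2*(γ^4*(8 + 8*r - r^2) + (8*r^4 + 8*r^3 - r^2)
      - 2*γ^2*(10*r + 19*r^2 + 10*r^3))
  - 4*(1 + r)*(r + γ^2)^3

theorem discriminant_factorization
    (r : ℝ) (hr : 0 < r)
    (xbar ybar sX sY : ℝ) (hsX : 0 < sX) (hsY : 0 < sY)
    (a₃ a₂ a₁ a₀ : ℝ)
    (h3 : a₃ = 1 + r)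
    (h2 : a₂ = -(2*xbar + ybar) - r*(2*ybar + xbar))
    (h1 : a₁ = xbar^2 + 2*(1+r)*xbar*ybar + r*ybar^2 + sX^2 + r*sY^2)
    (h0 : a₀ = -(xbar^2*ybar) - r*ybar^2*xbar - sX^2*ybar - r*sY^2*xbar)
    (Δ : ℝ)
    (hΔ : Δ = a₁^2*a₂^2 - 4*a₀*a₂^3 - 4*a₁^3*a₃ + 18*a₀*a₁*a₂*a₃ - 27*a₀^2*a₃^2) :
    Δ = sY^6 * D r (sX / sY) ((xbar - ybar) / sY) := by
  subst h3 h2 h1 h0 hΔ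
  have h : sY ≠ 0 := ne_of_gt hsY
  unfold D
  field_simp
  ring
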